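/- Let V be an n-dimensional real vector space equipped with a nondegenerate symmetric bilinear form (·,·) of signature (n−2,2), and let C₁, C₂, C₁′, C₂′ ∈ V. Assume that for every (s,t) ∈ [0,1]², the bilinear form (·,·) is negative definite on the 2-dimensional subspace z(s,t) := span{B₁(s), B₂(t)} (equivalently, the 2×2 Gram matrix of (B₁(s), B₂(t)) is negative definite). Then there exists a positive definite quadratic form Q_S on V such that for all x ∈ V and all (s,t) ∈ [0,1]²: (x,x) + 2·R(x, z(s,t)) ≥ Q_S(x). -/

import Mathlib

open Real Set Module

noncomputable section

section AuxMinorant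

variable {V : Type*} [AddCommGroup V] [Module ℝ V]

lemma aux_pos_span {n : ℕ} (B : LinearMap.BilinForm ℝ V) (bsig : Basis (Fin n) ℝ V)
    (horth : ∀ i j, i ≠ j → B (bsig i) (bsig j) = 0)
    (hpos : ∀ i : Fin n, (i : ℕ) < n - 2 → 0 < B (bsig i) (bsig i))
    (v : V) (hv : v ∈ Submodule.span ℝ (bsig '' {i : Fin n | (i : ℕ) < n - 2}))
    (hv0 : v ≠ 0) : 0 < B v v := by
  rw [Basis.mem_span_image] at hv
  have hrep : ∑ i, bsig.repr v i • bsig i = v := bsig.sum_repr v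
  have h1 : ∀ y, B v y = ∑ i, bsig.repr v i * B (bsig i) y := by
    intro y
    conv_lhs => rw [← hrep]
    rw [map_sum, LinearMap.sum_apply]
    simp [smul_eq_mul]
  have h2 : ∀ i, B (bsig i) v = bsig.repr v i * B (bsig i) (bsig i) := by
    intro i
    conv_lhs => rw [← hrep]
    rw [map_sum, Finset.sum_eq_single i]
    · rw [map_smul]; simp [smul_eq_mul]
    · intro j _ hj; rw [map_smul, horth i j (Ne.symm hj)]; simp
    · simp
  have hBvv : B v v = ∑ i, (bsig.repr v i)^2 * B (bsig i) (bsig i) := by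
    rw [h1 v]
    exact Finset.sum_congr rfl fun i _ => by rw [h2]; ring
  rw [hBvv]
  apply Finset.sum_pos'
  · intro i _
    by_cases h : bsig.repr v i = 0
    · simp [h]
    · have hi : (i : ℕ) < n - 2 := hv (Finsupp.mem_support_iff.2 h)
      exact mul_nonneg (sq_nonneg _) (hpos i hi).le
  · have hne : bsig.repr v ≠ 0 := by
      intro h
      exact hv0 (by simpa [h] using hrep.symm)
    obtain ⟨i, hi⟩ := Finsupp.ne_iff.1 hne
    have hi0 : bsig.repr v i ≠ 0 := by simpa using hi
    have hi' : (i : ℕ) < n - 2 := hv (Finsupp.mem_support_iff.2 hi0)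
    exact ⟨i, Finset.mem_univ i, mul_pos (by positivity) (hpos i hi')⟩

lemma aux_d_pos (B : LinearMap.BilinForm ℝ V) (hsymm : B.IsSymm) (b1 b2 : V)
    (hli : LinearIndependent ℝ ![b1, b2])
    (hnegspan : ∀ w ∈ Submodule.span ℝ {b1, b2}, w ≠ 0 → B w w < 0) :
    0 < B b1 b1 * B b2 b2 - B b1 b2 ^ 2 := by
  have hs : ∀ x y : V, B x y = B y x := fun x y => by simpa using hsymm.eq x y
  have hb1 : b1 ∈ Submodule.span ℝ ({b1, b2} : Set V) :=
    Submodule.subset_span (by simp)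
  have hb2 : b2 ∈ Submodule.span ℝ ({b1, b2} : Set V) :=
    Submodule.subset_span (by simp)
  have hb1ne : b1 ≠ 0 := by
    intro h
    have := LinearIndependent.pair_iff.1 hli 1 0 (by simp [h])
    simpa using this.1
  have h11 : B b1 b1 < 0 := hnegspan b1 hb1 hb1ne
  set w : V := B b1 b2 • b1 + (-B b1 b1) • b2 with hw
  have hwmem : w ∈ Submodule.span ℝ ({b1, b2} : Set V) :=
    Submodule.add_mem _ (Submodule.smul_mem _ _ hb1) (Submodule.smul_mem _ _ hb2)
  have hwne : w ≠ 0 := by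
    intro h
    have := LinearIndependent.pair_iff.1 hli (B b1 b2) (-B b1 b1) h
    exact absurd this.2 (by simpa using h11.ne)
  have hBww : B w w = B b1 b1 * (B b1 b1 * B b2 b2 - B b1 b2 ^ 2) := by
    simp only [hw, map_add, map_smul, map_neg, LinearMap.add_apply, LinearMap.smul_apply,
      LinearMap.neg_apply, smul_eq_mul]
    rw [hs b2 b1]
    ring
  have := hnegspan w hwmem hwne
  rw [hBww] at this
  nlinarith

lemma aux_proj (B : LinearMap.BilinForm ℝ V) (hsymm : B.IsSymm) (b1 b2 : V)
    (hd : B b1 b1 * B b2 b2 - B b1 b2 ^ 2 ≠ 0) (x : V) :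
    ∃ w ∈ Submodule.span ℝ ({b1, b2} : Set V),
      B (x - w) b1 = 0 ∧ B (x - w) b2 = 0 := by
  have hs : ∀ x y : V, B x y = B y x := fun x y => by simpa using hsymm.eq x y
  refine ⟨((B b2 b2 * B x b1 - B b1 b2 * B x b2) / (B b1 b1 * B b2 b2 - B b1 b2 ^ 2)) • b1 +
      ((B b1 b1 * B x b2 - B b1 b2 * B x b1) / (B b1 b1 * B b2 b2 - B b1 b2 ^ 2)) • b2,
    Submodule.add_mem _ (Submodule.smul_mem _ _ (Submodule.subset_span (by simp)))
      (Submodule.smul_mem _ _ (Submodule.subset_span (by simp))), ?_, ?_⟩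
  · simp only [map_sub, map_add, map_smul, LinearMap.sub_apply, LinearMap.add_apply,
      LinearMap.smul_apply, smul_eq_mul]
    rw [hs b2 b1]
    rw [div_mul_eq_mul_div, div_mul_eq_mul_div, ← add_div, sub_eq_zero, eq_div_iff hd]
    ring
  · simp only [map_sub, map_add, map_smul, LinearMap.sub_apply, LinearMap.add_apply,
      LinearMap.smul_apply, smul_eq_mul]
    rw [div_mul_eq_mul_div, div_mul_eq_mul_div, ← add_div, sub_eq_zero, eq_div_iff hd]
    ring

lemma aux_perp_pos {n : ℕ} (hn : 2 ≤ n)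
    (B : LinearMap.BilinForm ℝ V) (hsymm : B.IsSymm) (hnd : B.Nondegenerate)
    (bsig : Basis (Fin n) ℝ V)
    (b1 b2 : V) (hli : LinearIndependent ℝ ![b1, b2])
    (hnegspan : ∀ w ∈ Submodule.span ℝ {b1, b2}, w ≠ 0 → B w w < 0)
    (aux_pos_span : ∀ v ∈ Submodule.span ℝ (bsig '' {i : Fin n | (i : ℕ) < n - 2}),
      v ≠ 0 → 0 < B v v)
    (aux_proj : ∀ x : V, ∃ w ∈ Submodule.span ℝ ({b1, b2} : Set V),
      B (x - w) b1 = 0 ∧ B (x - w) b2 = 0)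
    (u : V) (hu1 : B u b1 = 0) (hu2 : B u b2 = 0) (hu0 : u ≠ 0) :
    0 < B u u := by
  have hs : ∀ x y : V, B x y = B y x := fun x y => by simpa using hsymm.eq x y
  haveI : FiniteDimensional ℝ V := Module.Finite.of_basis bsig
  have hfr : finrank ℝ V = n := by
    rw [finrank_eq_card_basis bsig, Fintype.card_fin]
  set z := Submodule.span ℝ ({b1, b2} : Set V) with hz
  have hperpz : ∀ v : V, B v b1 = 0 → B v b2 = 0 → ∀ w ∈ z, B v w = 0 := by
    intro v h1 h2 w hw
    induction hw using Submodule.span_induction with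
    | mem x hx =>
      rcases hx with h | h
      · rw [h]; exact h1
      · rw [Set.mem_singleton_iff] at h; rw [h]; exact h2
    | zero => simp
    | add x y _ _ hx hy => simp [hx, hy]
    | smul c x _ hx => simp [hx]
  have hstepA : ∀ v : V, B v b1 = 0 → B v b2 = 0 → v ≠ 0 → ¬ (B v v < 0) := by
    intro v h1 h2 hv0 hvv
    have hvz : v ∉ z := by
      intro h
      have := hperpz v h1 h2 v h
      exact absurd this hvv.ne
    set W : Submodule ℝ V := z ⊔ (ℝ ∙ v) with hW
    have hrange : Set.range ![b1, b2] = {b1, b2} := by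
      simp [Matrix.range_cons, Matrix.range_empty, Set.pair_comm]
    have hfz : finrank ℝ z = 2 := by
      rw [hz, ← hrange, finrank_span_eq_card hli, Fintype.card_fin]
    have hinf : z ⊓ (ℝ ∙ v) = ⊥ := by
      rw [Submodule.eq_bot_iff]
      rintro x ⟨hxz, hxv⟩
      obtain ⟨c, rfl⟩ := Submodule.mem_span_singleton.1 hxv
      rcases eq_or_ne c 0 with rfl | hc
      · simp
      · have hmem : c⁻¹ • c • v ∈ z := Submodule.smul_mem _ _ hxz
        rw [smul_smul, inv_mul_cancel₀ hc, one_smul] at hmem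
        exact absurd hmem hvz
    have hfW : finrank ℝ W = 3 := by
      have := Submodule.finrank_sup_add_finrank_inf_eq z (ℝ ∙ v)
      rw [← hW, hinf, finrank_bot, hfz, finrank_span_singleton hv0] at this
      omega
    have hWneg : ∀ w ∈ W, w ≠ 0 → B w w < 0 := by
      intro w hw hw0
      obtain ⟨y, hy, zv, hzv, rfl⟩ := Submodule.mem_sup.1 hw
      obtain ⟨c, rfl⟩ := Submodule.mem_span_singleton.1 hzv
      have hyv : B y v = 0 := hs v y ▸ hperpz v h1 h2 y hy
      have hexp : B (y + c • v) (y + c • v) = B y y + c ^ 2 * B v v := by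
        simp only [map_add, map_smul, LinearMap.add_apply, LinearMap.smul_apply, smul_eq_mul]
        rw [hyv, hperpz v h1 h2 y hy]
        ring
      rw [hexp]
      rcases eq_or_ne y 0 with rfl | hy0
      · have hc : c ≠ 0 := by
          intro h; apply hw0; simp [h]
        have : c ^ 2 * B v v < 0 := mul_neg_of_pos_of_neg (by positivity) hvv
        simpa using this
      · have h1' : B y y < 0 := hnegspan y hy hy0
        rcases eq_or_ne c 0 with rfl | hc
        · simpa using h1'
        · nlinarith [mul_neg_of_pos_of_neg (show (0:ℝ) < c ^ 2 by positivity) hvv]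
    set P : Submodule ℝ V := Submodule.span ℝ (bsig '' {i : Fin n | (i : ℕ) < n - 2}) with hP
    have hfP : finrank ℝ P = n - 2 := by
      have hli' : LinearIndependent ℝ
          (fun i : {i : Fin n // (i : ℕ) < n - 2} => bsig i) :=
        bsig.linearIndependent.comp Subtype.val Subtype.val_injective
      have hr : Set.range (fun i : {i : Fin n // (i : ℕ) < n - 2} => bsig (i : Fin n)) =
          bsig '' {i : Fin n | (i : ℕ) < n - 2} := by
        ext x; simp [Set.mem_image]
      have e : {i : Fin n // (i : ℕ) < n - 2} ≃ Fin (n - 2) :=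
        { toFun := fun i => ⟨i, i.2⟩
          invFun := fun j => ⟨⟨j, lt_of_lt_of_le j.2 (Nat.sub_le n 2)⟩, j.2⟩
          left_inv := fun i => Subtype.ext (Fin.ext rfl)
          right_inv := fun j => rfl }
      rw [hP, ← hr, finrank_span_eq_card hli', Fintype.card_congr e, Fintype.card_fin]
    have hfsup : finrank ℝ (W ⊔ P : Submodule ℝ V) ≤ n := hfr ▸ Submodule.finrank_le _
    have heq := Submodule.finrank_sup_add_finrank_inf_eq W P
    have hposrank : 0 < finrank ℝ (W ⊓ P : Submodule ℝ V) := by omega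
    have hnebot : (W ⊓ P : Submodule ℝ V) ≠ ⊥ := by
      intro h
      rw [h, finrank_bot] at hposrank
      omega
    obtain ⟨x, hx, hx0⟩ := Submodule.exists_mem_ne_zero_of_ne_bot hnebot
    rw [Submodule.mem_inf] at hx
    have hlt := hWneg x hx.1 hx0
    have hgt := aux_pos_span x hx.2 hx0
    linarith
  have hstepB : ∀ v : V, B v b1 = 0 → B v b2 = 0 → 0 ≤ B v v := by
    intro v h1 h2
    rcases eq_or_ne v 0 with rfl | hv0
    · simp
    · exact le_of_not_gt (hstepA v h1 h2 hv0)
  rcases lt_or_eq_of_le (hstepB u hu1 hu2) with h | h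
  · exact h
  exfalso
  apply hu0
  apply hnd.1
  intro y
  obtain ⟨w, hw, hp1, hp2⟩ := aux_proj y
  have hup : B u (y - w) = 0 := by
    by_contra hne
    set p := y - w with hpdef
    have hpp : 0 ≤ B p p := hstepB p hp1 hp2
    set c : ℝ := -(B p p + 1) / (2 * B u p) with hc
    have hmem1 : B (p + c • u) b1 = 0 := by
      simp only [map_add, map_smul, LinearMap.add_apply, LinearMap.smul_apply, smul_eq_mul]
      rw [hp1, hu1]; ring
    have hmem2 : B (p + c • u) b2 = 0 := by
      simp only [map_add, map_smul, LinearMap.add_apply, LinearMap.smul_apply, smul_eq_mul]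
      rw [hp2, hu2]; ring
    have h0 : 0 ≤ B (p + c • u) (p + c • u) := hstepB _ hmem1 hmem2
    have hexp : B (p + c • u) (p + c • u) = B p p + 2 * c * B u p := by
      simp only [map_add, map_smul, LinearMap.add_apply, LinearMap.smul_apply, smul_eq_mul]
      rw [← h, hs p u]
      ring
    rw [hexp] at h0
    have hval : B p p + 2 * c * B u p = -1 := by
      rw [hc]
      field_simp
      ring
    rw [hval] at h0
    linarith
  have huw : B u w = 0 := hperpz u hu1 hu2 w hw
  have : B u y = B u (y - w) + B u w := by
    simp only [map_sub]
    ring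
  rw [this, hup, huw]
  ring

lemma aux_value (B : LinearMap.BilinForm ℝ V) (hsymm : B.IsSymm) (b1 b2 : V)
    (hd : B b1 b1 * B b2 b2 - B b1 b2 ^ 2 ≠ 0) (x w : V)
    (hw : w ∈ Submodule.span ℝ ({b1, b2} : Set V))
    (hperp : ∀ u ∈ Submodule.span ℝ ({b1, b2} : Set V), B (x - w) u = 0) :
    B w w = (B b2 b2 * B x b1 ^ 2 - 2 * B b1 b2 * B x b1 * B x b2
        + B b1 b1 * B x b2 ^ 2) / (B b1 b1 * B b2 b2 - B b1 b2 ^ 2) := by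
  have hs : ∀ x y : V, B x y = B y x := fun x y => by simpa using hsymm.eq x y
  obtain ⟨α, β, rfl⟩ := Submodule.mem_span_pair.1 hw
  have hb1 : b1 ∈ Submodule.span ℝ ({b1, b2} : Set V) := Submodule.subset_span (by simp)
  have hb2 : b2 ∈ Submodule.span ℝ ({b1, b2} : Set V) := Submodule.subset_span (by simp)
  have e1 : B x b1 = α * B b1 b1 + β * B b1 b2 := by
    have := hperp b1 hb1
    simp only [map_sub, map_add, map_smul, LinearMap.sub_apply, LinearMap.add_apply,
      LinearMap.smul_apply, smul_eq_mul] at this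
    rw [hs b2 b1] at this
    linarith
  have e2 : B x b2 = α * B b1 b2 + β * B b2 b2 := by
    have := hperp b2 hb2
    simp only [map_sub, map_add, map_smul, LinearMap.sub_apply, LinearMap.add_apply,
      LinearMap.smul_apply, smul_eq_mul] at this
    linarith
  have hww : B (α • b1 + β • b2) (α • b1 + β • b2)
      = α ^ 2 * B b1 b1 + 2 * α * β * B b1 b2 + β ^ 2 * B b2 b2 := by
    simp only [map_add, map_smul, LinearMap.add_apply, LinearMap.smul_apply, smul_eq_mul]
    rw [hs b2 b1]
    ring
  rw [hww, e1, e2, eq_div_iff hd]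
  ring

lemma aux_major_pos (B : LinearMap.BilinForm ℝ V) (hsymm : B.IsSymm) (b1 b2 : V)
    (hnegspan : ∀ w ∈ Submodule.span ℝ {b1, b2}, w ≠ 0 → B w w < 0)
    (hperp_pos : ∀ u : V, B u b1 = 0 → B u b2 = 0 → u ≠ 0 → 0 < B u u)
    (x w : V) (hx : x ≠ 0)
    (hw : w ∈ Submodule.span ℝ ({b1, b2} : Set V))
    (hperp : ∀ u ∈ Submodule.span ℝ ({b1, b2} : Set V), B (x - w) u = 0) :
    0 < B x x - 2 * B w w := by
  have hs : ∀ x y : V, B x y = B y x := fun x y => by simpa using hsymm.eq x y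
  have hb1 : b1 ∈ Submodule.span ℝ ({b1, b2} : Set V) := Submodule.subset_span (by simp)
  have hb2 : b2 ∈ Submodule.span ℝ ({b1, b2} : Set V) := Submodule.subset_span (by simp)
  have huw : B (x - w) w = 0 := hperp w hw
  have hsplit : B x x = B w w + B (x - w) (x - w) := by
    have h1 : B x x = B ((x - w) + w) ((x - w) + w) := by rw [sub_add_cancel]
    rw [h1]
    simp only [map_add, LinearMap.add_apply]
    rw [hs w (x - w), huw]
    ring
  rcases eq_or_ne (x - w) 0 with h | h
  · have hxw : x = w := sub_eq_zero.1 h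
    have hwneg : B w w < 0 := hnegspan w hw (hxw ▸ hx)
    rw [hsplit, h]
    simp only [map_zero, LinearMap.zero_apply]
    linarith
  · have hu : 0 < B (x - w) (x - w) :=
      hperp_pos _ (hperp b1 hb1) (hperp b2 hb2) h
    have hwle : B w w ≤ 0 := by
      rcases eq_or_ne w 0 with rfl | hw0
      · simp
      · exact (hnegspan w hw hw0).le
    rw [hsplit]
    linarith

end AuxMinorant

set_option maxHeartbeats 2000000 in
/-- Lemma 4.8 of the paper: if the bilinear form of signature `(n−2,2)` is
negative definite on the plane `z(s,t) = span{B₁(s), B₂(t)}` for all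
`(s,t) ∈ [0,1]²`, then there is a positive definite quadratic form `Q_S` on `V`
with `(x,x)_{z(s,t)} = (x,x) − 2(pr_{z(s,t)}x, pr_{z(s,t)}x) ≥ Q_S(x)` for all
`x ∈ V` and `(s,t) ∈ [0,1]²`.  Here the orthogonal projection `w = pr_z(x)` is
characterized by `w ∈ z` and `x − w ⊥ z`. -/
theorem exists_posDef_minorant
    {V : Type*} [AddCommGroup V] [Module ℝ V]
    (n : ℕ) (hn : 2 ≤ n)
    (B : LinearMap.BilinForm ℝ V) (hsymm : B.IsSymm) (hnd : B.Nondegenerate)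
    (bsig : Basis (Fin n) ℝ V)
    (horth : ∀ i j, i ≠ j → B (bsig i) (bsig j) = 0)
    (hsig : ∀ i : Fin n, ((i : ℕ) < n - 2 → 0 < B (bsig i) (bsig i)) ∧
        (n - 2 ≤ (i : ℕ) → B (bsig i) (bsig i) < 0))
    (C₁ C₂ C₁' C₂' : V)
    (hneg : ∀ s ∈ Icc (0:ℝ) 1, ∀ t ∈ Icc (0:ℝ) 1,
      LinearIndependent ℝ ![(1 - s) • C₁ + s • C₁', (1 - t) • C₂ + t • C₂'] ∧
      ∀ w ∈ Submodule.span ℝ {(1 - s) • C₁ + s • C₁', (1 - t) • C₂ + t • C₂'},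
        w ≠ 0 → B w w < 0) :
    ∃ Q : QuadraticForm ℝ V, Q.PosDef ∧
      ∀ x : V, ∀ s ∈ Icc (0:ℝ) 1, ∀ t ∈ Icc (0:ℝ) 1,
        ∀ w ∈ Submodule.span ℝ {(1 - s) • C₁ + s • C₁', (1 - t) • C₂ + t • C₂'},
          (∀ u ∈ Submodule.span ℝ {(1 - s) • C₁ + s • C₁', (1 - t) • C₂ + t • C₂'},
            B (x - w) u = 0) →
          B x x - 2 * B w w ≥ Q x := by
  classical
  haveI : FiniteDimensional ℝ V := Module.Finite.of_basis bsig
  haveI : Nonempty (Fin n) := ⟨⟨0, by omega⟩⟩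
  have hpos_span : ∀ v ∈ Submodule.span ℝ (bsig '' {i : Fin n | (i : ℕ) < n - 2}),
      v ≠ 0 → 0 < B v v := fun v hv hv0 =>
    aux_pos_span B bsig horth (fun i hi => (hsig i).1 hi) v hv hv0
  let b1 : ℝ → V := fun s => (1 - s) • C₁ + s • C₁'
  let b2 : ℝ → V := fun t => (1 - t) • C₂ + t • C₂'
  have hD : ∀ s ∈ Icc (0:ℝ) 1, ∀ t ∈ Icc (0:ℝ) 1,
      0 < B (b1 s) (b1 s) * B (b2 t) (b2 t) - B (b1 s) (b2 t) ^ 2 := by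
    intro s hs t ht
    exact aux_d_pos B hsymm _ _ (hneg s hs t ht).1 (hneg s hs t ht).2
  have hprojex : ∀ s ∈ Icc (0:ℝ) 1, ∀ t ∈ Icc (0:ℝ) 1, ∀ x : V,
      ∃ w ∈ Submodule.span ℝ ({b1 s, b2 t} : Set V),
        B (x - w) (b1 s) = 0 ∧ B (x - w) (b2 t) = 0 := by
    intro s hs t ht x
    exact aux_proj B hsymm _ _ (hD s hs t ht).ne' x
  have hperp_pos : ∀ s ∈ Icc (0:ℝ) 1, ∀ t ∈ Icc (0:ℝ) 1, ∀ u : V,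
      B u (b1 s) = 0 → B u (b2 t) = 0 → u ≠ 0 → 0 < B u u := by
    intro s hs t ht
    exact aux_perp_pos hn B hsymm hnd bsig _ _ (hneg s hs t ht).1 (hneg s hs t ht).2
      hpos_span (hprojex s hs t ht)
  -- perpendicularity to the generators extends to the span
  have hperpspan : ∀ (a b v : V), B v a = 0 → B v b = 0 →
      ∀ u ∈ Submodule.span ℝ ({a, b} : Set V), B v u = 0 := by
    intro a b v h1 h2 u hu
    obtain ⟨α, β, rfl⟩ := Submodule.mem_span_pair.1 hu
    simp only [map_add, map_smul, smul_eq_mul]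
    rw [h1, h2]
    ring
  -- scalar coordinate functions
  let L : V → (Fin n → ℝ) → ℝ := fun y c => ∑ i, c i * B (bsig i) y
  have hL : ∀ (y : V) (x : V), L y (bsig.equivFun x) = B x y := by
    intro y x
    have hrep : ∑ i, bsig.repr x i • bsig i = x := bsig.sum_repr x
    show ∑ i, bsig.equivFun x i * B (bsig i) y = B x y
    conv_rhs => rw [← hrep]
    rw [map_sum, LinearMap.sum_apply]
    simp [Basis.equivFun_apply, smul_eq_mul]
  let qf : (Fin n → ℝ) → ℝ := fun c => ∑ i, ∑ j, c i * c j * B (bsig i) (bsig j)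
  have hqf : ∀ x : V, qf (bsig.equivFun x) = B x x := by
    intro x
    have hrep : ∑ i, bsig.repr x i • bsig i = x := bsig.sum_repr x
    have hin : ∀ i, ∑ j, bsig.equivFun x i * bsig.equivFun x j * B (bsig i) (bsig j)
        = bsig.equivFun x i * B (bsig i) x := by
      intro i
      have : B (bsig i) x = ∑ j, bsig.repr x j * B (bsig i) (bsig j) := by
        conv_lhs => rw [← hrep]
        rw [map_sum]
        simp [smul_eq_mul]
      rw [this, Finset.mul_sum]
      exact Finset.sum_congr rfl fun j _ => by
        simp [Basis.equivFun_apply]; ring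
    show ∑ i, ∑ j, bsig.equivFun x i * bsig.equivFun x j * B (bsig i) (bsig j) = B x x
    rw [Finset.sum_congr rfl fun i _ => hin i]
    exact hL x x
  let G11 : ℝ → ℝ := fun s => (1-s)^2 * B C₁ C₁ + (1-s)*s*(B C₁ C₁' + B C₁' C₁)
      + s^2 * B C₁' C₁'
  let G22 : ℝ → ℝ := fun t => (1-t)^2 * B C₂ C₂ + (1-t)*t*(B C₂ C₂' + B C₂' C₂)
      + t^2 * B C₂' C₂'
  let G12 : ℝ → ℝ → ℝ := fun s t => (1-s)*(1-t) * B C₁ C₂ + (1-s)*t * B C₁ C₂'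
      + s*(1-t) * B C₁' C₂ + s*t * B C₁' C₂'
  have hG11 : ∀ s, G11 s = B (b1 s) (b1 s) := by
    intro s
    show _ = B ((1 - s) • C₁ + s • C₁') ((1 - s) • C₁ + s • C₁')
    simp only [map_add, map_smul, LinearMap.add_apply, LinearMap.smul_apply, smul_eq_mul]
    ring
  have hG22 : ∀ t, G22 t = B (b2 t) (b2 t) := by
    intro t
    show _ = B ((1 - t) • C₂ + t • C₂') ((1 - t) • C₂ + t • C₂')
    simp only [map_add, map_smul, LinearMap.add_apply, LinearMap.smul_apply, smul_eq_mul]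
    ring
  have hG12 : ∀ s t, G12 s t = B (b1 s) (b2 t) := by
    intro s t
    show _ = B ((1 - s) • C₁ + s • C₁') ((1 - t) • C₂ + t • C₂')
    simp only [map_add, map_smul, LinearMap.add_apply, LinearMap.smul_apply, smul_eq_mul]
    ring
  let V1 : ℝ → (Fin n → ℝ) → ℝ := fun s c => (1-s) * L C₁ c + s * L C₁' c
  let V2 : ℝ → (Fin n → ℝ) → ℝ := fun t c => (1-t) * L C₂ c + t * L C₂' c
  have hV1 : ∀ s (x : V), V1 s (bsig.equivFun x) = B x (b1 s) := by
    intro s x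
    show (1-s) * L C₁ (bsig.equivFun x) + s * L C₁' (bsig.equivFun x) = _
    rw [hL, hL]
    show _ = B x ((1 - s) • C₁ + s • C₁')
    simp only [map_add, map_smul, smul_eq_mul]
  have hV2 : ∀ t (x : V), V2 t (bsig.equivFun x) = B x (b2 t) := by
    intro t x
    show (1-t) * L C₂ (bsig.equivFun x) + t * L C₂' (bsig.equivFun x) = _
    rw [hL, hL]
    show _ = B x ((1 - t) • C₂ + t • C₂')
    simp only [map_add, map_smul, smul_eq_mul]
  let φ : ℝ × ℝ × (Fin n → ℝ) → ℝ := fun p =>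
    qf p.2.2 - 2 * ((G22 p.2.1 * (V1 p.1 p.2.2) ^ 2
      - 2 * G12 p.1 p.2.1 * V1 p.1 p.2.2 * V2 p.2.1 p.2.2
      + G11 p.1 * (V2 p.2.1 p.2.2) ^ 2) / (G11 p.1 * G22 p.2.1 - G12 p.1 p.2.1 ^ 2))
  have hφeq : ∀ s t (x : V), φ (s, t, bsig.equivFun x) =
      B x x - 2 * ((B (b2 t) (b2 t) * B x (b1 s) ^ 2
        - 2 * B (b1 s) (b2 t) * B x (b1 s) * B x (b2 t)
        + B (b1 s) (b1 s) * B x (b2 t) ^ 2)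
        / (B (b1 s) (b1 s) * B (b2 t) (b2 t) - B (b1 s) (b2 t) ^ 2)) := by
    intro s t x
    show qf (bsig.equivFun x) - 2 * ((G22 t * (V1 s (bsig.equivFun x)) ^ 2
      - 2 * G12 s t * V1 s (bsig.equivFun x) * V2 t (bsig.equivFun x)
      + G11 s * (V2 t (bsig.equivFun x)) ^ 2) / (G11 s * G22 t - G12 s t ^ 2)) = _
    rw [hqf, hV1, hV2, hG11, hG22, hG12]
  have hkey : ∀ s ∈ Icc (0:ℝ) 1, ∀ t ∈ Icc (0:ℝ) 1, ∀ x w : V,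
      w ∈ Submodule.span ℝ ({b1 s, b2 t} : Set V) →
      (∀ u ∈ Submodule.span ℝ ({b1 s, b2 t} : Set V), B (x - w) u = 0) →
      B x x - 2 * B w w = φ (s, t, bsig.equivFun x) := by
    intro s hs t ht x w hw hp
    rw [hφeq, aux_value B hsymm _ _ (hD s hs t ht).ne' x w hw hp]
  -- the compact parameter set
  let K : Set (ℝ × ℝ × (Fin n → ℝ)) :=
    Icc (0:ℝ) 1 ×ˢ Icc (0:ℝ) 1 ×ˢ Metric.sphere (0 : Fin n → ℝ) 1
  have hKc : IsCompact K :=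
    isCompact_Icc.prod (isCompact_Icc.prod (isCompact_sphere _ _))
  have hKne : K.Nonempty := by
    refine ⟨⟨0, 0, fun _ => 1⟩, ?_, ?_, ?_⟩
    · exact ⟨le_refl _, zero_le_one⟩
    · exact ⟨le_refl _, zero_le_one⟩
    · simp [Metric.mem_sphere, dist_zero_right, pi_norm_const]
  -- positivity of φ on K
  have hφpos : ∀ p ∈ K, 0 < φ p := by
    rintro ⟨s, t, c⟩ ⟨hsI, htI, hcS⟩
    have hc1 : ‖c‖ = 1 := by simpa [dist_zero_right] using hcS
    set x : V := bsig.equivFun.symm c with hxdef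
    have hc : bsig.equivFun x = c := bsig.equivFun.apply_symm_apply c
    have hx0 : x ≠ 0 := by
      intro h
      rw [h, map_zero] at hc
      rw [← hc] at hc1
      simp at hc1
    obtain ⟨w, hw, hp1, hp2⟩ := hprojex s hsI t htI x
    have hperp : ∀ u ∈ Submodule.span ℝ ({b1 s, b2 t} : Set V), B (x - w) u = 0 :=
      hperpspan _ _ _ hp1 hp2
    have hmaj := aux_major_pos B hsymm _ _ (hneg s hsI t htI).2
      (hperp_pos s hsI t htI) x w hx0 hw hperp
    have heq := hkey s hsI t htI x w hw hperp
    rw [heq, hc] at hmaj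
    exact hmaj
  -- continuity of φ on K
  have hLc : ∀ y : V, Continuous (L y) := fun y =>
    continuous_finset_sum _ fun i _ => (continuous_apply i).mul continuous_const
  have hqfc : Continuous qf :=
    continuous_finset_sum _ fun i _ => continuous_finset_sum _ fun j _ =>
      ((continuous_apply i).mul (continuous_apply j)).mul continuous_const
  have hc_s : Continuous fun p : ℝ × ℝ × (Fin n → ℝ) => p.1 := continuous_fst
  have hc_t : Continuous fun p : ℝ × ℝ × (Fin n → ℝ) => p.2.1 :=
    continuous_fst.comp continuous_snd
  have hc_c : Continuous fun p : ℝ × ℝ × (Fin n → ℝ) => p.2.2 :=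
    continuous_snd.comp continuous_snd
  have hG11c : Continuous fun p : ℝ × ℝ × (Fin n → ℝ) => G11 p.1 := by
    show Continuous fun p : ℝ × ℝ × (Fin n → ℝ) =>
      (1-p.1)^2 * B C₁ C₁ + (1-p.1)*p.1*(B C₁ C₁' + B C₁' C₁) + p.1^2 * B C₁' C₁'
    fun_prop
  have hG22c : Continuous fun p : ℝ × ℝ × (Fin n → ℝ) => G22 p.2.1 := by
    show Continuous fun p : ℝ × ℝ × (Fin n → ℝ) =>
      (1-p.2.1)^2 * B C₂ C₂ + (1-p.2.1)*p.2.1*(B C₂ C₂' + B C₂' C₂) + p.2.1^2 * B C₂' C₂'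
    fun_prop
  have hG12c : Continuous fun p : ℝ × ℝ × (Fin n → ℝ) => G12 p.1 p.2.1 := by
    show Continuous fun p : ℝ × ℝ × (Fin n → ℝ) =>
      (1-p.1)*(1-p.2.1) * B C₁ C₂ + (1-p.1)*p.2.1 * B C₁ C₂'
        + p.1*(1-p.2.1) * B C₁' C₂ + p.1*p.2.1 * B C₁' C₂'
    fun_prop
  have hV1c : Continuous fun p : ℝ × ℝ × (Fin n → ℝ) => V1 p.1 p.2.2 := by
    show Continuous fun p : ℝ × ℝ × (Fin n → ℝ) =>
      (1-p.1) * L C₁ p.2.2 + p.1 * L C₁' p.2.2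
    exact ((continuous_const.sub hc_s).mul ((hLc C₁).comp hc_c)).add
      (hc_s.mul ((hLc C₁').comp hc_c))
  have hV2c : Continuous fun p : ℝ × ℝ × (Fin n → ℝ) => V2 p.2.1 p.2.2 := by
    show Continuous fun p : ℝ × ℝ × (Fin n → ℝ) =>
      (1-p.2.1) * L C₂ p.2.2 + p.2.1 * L C₂' p.2.2
    exact ((continuous_const.sub hc_t).mul ((hLc C₂).comp hc_c)).add
      (hc_t.mul ((hLc C₂').comp hc_c))
  have hnumc : Continuous fun p : ℝ × ℝ × (Fin n → ℝ) =>
      G22 p.2.1 * (V1 p.1 p.2.2) ^ 2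
        - 2 * G12 p.1 p.2.1 * V1 p.1 p.2.2 * V2 p.2.1 p.2.2
        + G11 p.1 * (V2 p.2.1 p.2.2) ^ 2 :=
    ((hG22c.mul (hV1c.pow 2)).sub
      (((continuous_const.mul hG12c).mul hV1c).mul hV2c)).add (hG11c.mul (hV2c.pow 2))
  have hdenc : Continuous fun p : ℝ × ℝ × (Fin n → ℝ) =>
      G11 p.1 * G22 p.2.1 - G12 p.1 p.2.1 ^ 2 :=
    (hG11c.mul hG22c).sub (hG12c.pow 2)
  have hdenne : ∀ p ∈ K, G11 p.1 * G22 p.2.1 - G12 p.1 p.2.1 ^ 2 ≠ 0 := by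
    rintro ⟨s, t, c⟩ ⟨hsI, htI, _⟩
    rw [hG11, hG22, hG12]
    exact (hD s hsI t htI).ne'
  have hcont : ContinuousOn φ K := by
    apply ContinuousOn.sub (hqfc.comp hc_c).continuousOn
    apply ContinuousOn.mul continuousOn_const
    exact ContinuousOn.div hnumc.continuousOn hdenc.continuousOn hdenne
  obtain ⟨p₀, hp₀, hmin⟩ := hKc.exists_isMinOn hKne hcont
  set ε : ℝ := φ p₀ with hεdef
  have hε : 0 < ε := hφpos p₀ hp₀
  have hlow : ∀ p ∈ K, ε ≤ φ p := fun p hp => isMinOn_iff.1 hmin p hp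
  -- scaling bound
  have hscale : ∀ s ∈ Icc (0:ℝ) 1, ∀ t ∈ Icc (0:ℝ) 1, ∀ x : V, x ≠ 0 →
      ε * ‖bsig.equivFun x‖ ^ 2 ≤ φ (s, t, bsig.equivFun x) := by
    intro s hsI t htI x hx0
    have hc0 : bsig.equivFun x ≠ 0 := fun h =>
      hx0 ((LinearEquiv.map_eq_zero_iff _).1 h)
    set r : ℝ := ‖bsig.equivFun x‖ with hr
    have hr0 : 0 < r := norm_pos_iff.2 hc0
    set x' : V := r⁻¹ • x with hx'def
    have hcx' : bsig.equivFun x' = r⁻¹ • bsig.equivFun x := by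
      rw [hx'def, map_smul]
    have hx'S : bsig.equivFun x' ∈ Metric.sphere (0 : Fin n → ℝ) 1 := by
      rw [Metric.mem_sphere, dist_zero_right, hcx', norm_smul, ← hr,
        norm_inv, Real.norm_eq_abs, abs_of_pos hr0, inv_mul_cancel₀ hr0.ne']
    have hmem : (s, t, bsig.equivFun x') ∈ K := ⟨hsI, htI, hx'S⟩
    have hge : ε ≤ φ (s, t, bsig.equivFun x') := hlow _ hmem
    have hxx' : x = r • x' := by
      rw [hx'def, smul_smul, mul_inv_cancel₀ hr0.ne', one_smul]
    have e1 : B x (b1 s) = r * B x' (b1 s) := by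
      conv_lhs => rw [hxx']
      simp [smul_eq_mul]
    have e2 : B x (b2 t) = r * B x' (b2 t) := by
      conv_lhs => rw [hxx']
      simp [smul_eq_mul]
    have exx : B x x = r ^ 2 * B x' x' := by
      conv_lhs => rw [hxx']
      simp only [map_smul, LinearMap.smul_apply, smul_eq_mul]
      ring
    have hdne := (hD s hsI t htI).ne'
    have hhom : φ (s, t, bsig.equivFun x) = r ^ 2 * φ (s, t, bsig.equivFun x') := by
      rw [hφeq, hφeq, e1, e2, exx]
      field_simp
    rw [hhom]
    calc ε * r ^ 2 = r ^ 2 * ε := by ring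
    _ ≤ r ^ 2 * φ (s, t, bsig.equivFun x') :=
        mul_le_mul_of_nonneg_left hge (sq_nonneg r)
  -- the quadratic form
  have hnR : (0:ℝ) < (n:ℝ) := by
    have : (0:ℕ) < n := by omega
    exact_mod_cast this
  let Bq : LinearMap.BilinForm ℝ V := LinearMap.mk₂ ℝ
    (fun x y => (ε / n) * ∑ i, bsig.equivFun x i * bsig.equivFun y i)
    (by
      intro x x' y
      simp only [map_add, Pi.add_apply, add_mul, Finset.sum_add_distrib, mul_add])
    (by
      intro a x y
      simp only [map_smul, Pi.smul_apply, smul_eq_mul, Finset.mul_sum]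
      exact Finset.sum_congr rfl fun i _ => by ring)
    (by
      intro x y y'
      simp only [map_add, Pi.add_apply, mul_add, Finset.sum_add_distrib])
    (by
      intro a x y
      simp only [map_smul, Pi.smul_apply, smul_eq_mul, Finset.mul_sum]
      exact Finset.sum_congr rfl fun i _ => by ring)
  let Q : QuadraticForm ℝ V := LinearMap.BilinMap.toQuadraticMap Bq
  have hQ : ∀ x : V, Q x = (ε / n) * ∑ i, (bsig.equivFun x i) ^ 2 := by
    intro x
    rw [show Q x = Bq x x from LinearMap.BilinMap.toQuadraticMap_apply Bq x]
    show (ε / n) * ∑ i, bsig.equivFun x i * bsig.equivFun x i = _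
    congr 1
    exact Finset.sum_congr rfl fun i _ => (sq (bsig.equivFun x i)).symm ▸ (by ring)
  have hQle : ∀ x : V, Q x ≤ ε * ‖bsig.equivFun x‖ ^ 2 := by
    intro x
    rw [hQ]
    have hsum : ∑ i, (bsig.equivFun x i) ^ 2 ≤ (n:ℝ) * ‖bsig.equivFun x‖ ^ 2 := by
      calc ∑ i, (bsig.equivFun x i) ^ 2 ≤ ∑ _i : Fin n, ‖bsig.equivFun x‖ ^ 2 := by
            apply Finset.sum_le_sum
            intro i _
            have h1 : |bsig.equivFun x i| ≤ ‖bsig.equivFun x‖ := by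
              simpa [Real.norm_eq_abs] using norm_le_pi_norm (bsig.equivFun x) i
            calc (bsig.equivFun x i) ^ 2 = |bsig.equivFun x i| ^ 2 := (sq_abs _).symm
            _ ≤ ‖bsig.equivFun x‖ ^ 2 :=
                pow_le_pow_left₀ (abs_nonneg _) h1 2
      _ = (n:ℝ) * ‖bsig.equivFun x‖ ^ 2 := by
            simp [Finset.sum_const, Finset.card_univ, nsmul_eq_mul]
    calc (ε / n) * ∑ i, (bsig.equivFun x i) ^ 2
        ≤ (ε / n) * ((n:ℝ) * ‖bsig.equivFun x‖ ^ 2) :=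
          mul_le_mul_of_nonneg_left hsum (by positivity)
    _ = ε * ‖bsig.equivFun x‖ ^ 2 := by field_simp
  refine ⟨Q, ?_, ?_⟩
  · intro x hx0
    rw [hQ]
    have hc0 : bsig.equivFun x ≠ 0 := fun h =>
      hx0 ((LinearEquiv.map_eq_zero_iff _).1 h)
    have : 0 < ∑ i, (bsig.equivFun x i) ^ 2 := by
      apply Finset.sum_pos'
      · intro i _; positivity
      · obtain ⟨i, hi⟩ := Function.ne_iff.1 hc0
        have hi' : bsig.equivFun x i ≠ 0 := by simpa using hi
        exact ⟨i, Finset.mem_univ i, by simpa [sq_abs] using pow_pos (abs_pos.2 hi') 2⟩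
    exact mul_pos (div_pos hε hnR) this
  · intro x s hsI t htI w hw hperp
    have heq := hkey s hsI t htI x w hw hperp
    rcases eq_or_ne x 0 with rfl | hx0
    · have hww : B w w = 0 := by
        have := hperp w hw
        simp only [zero_sub, map_neg, LinearMap.neg_apply] at this
        linarith
      rw [QuadraticMap.map_zero]
      simp [hww]
    · have h1 := hscale s hsI t htI x hx0
      rw [← heq] at h1
      exact le_trans (hQle x) h1
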